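/- Let q be a prime power, O an oval in PG(2,q), and K the cone in PG(3,q) with vertex a point V not in the plane of O, projecting O. Then the incidence structure L_2(O) — with points the points of K other than V, generators the q+1 lines of K through V, and circles the intersections with K of planes of PG(3,q) not through V — is a Laguerre plane of order q. -/

import Mathlib

open Projectivization
open scoped LinearAlgebra.Projectivization

/-- A finite Laguerre plane of order `n` with point set `P` (a set inside an ambient
type): `P` has `n(n+1)` points, there are `n^3` circles and `n+1` generators (subsets of
`P`), the generators partition `P` with `n` points each, each circle meets each
generator in exactly one point, and any three pairwise non-parallel points lie on a
unique circle. -/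
def IsLaguerreOn {X : Type*} (P : Set X) (n : ℕ) (C G : Set (Set X)) : Prop :=
  Nat.card P = n * (n + 1) ∧ Nat.card C = n ^ 3 ∧ Nat.card G = n + 1 ∧
  (∀ c ∈ C, c ⊆ P) ∧ (∀ g ∈ G, g ⊆ P) ∧
  (∀ g ∈ G, Nat.card g = n) ∧
  (∀ p ∈ P, ∃! g, g ∈ G ∧ p ∈ g) ∧
  (∀ c ∈ C, ∀ g ∈ G, ∃! x, x ∈ c ∧ x ∈ g) ∧
  (∀ p₁ ∈ P, ∀ p₂ ∈ P, ∀ p₃ ∈ P,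
    (¬ ∃ g ∈ G, p₁ ∈ g ∧ p₂ ∈ g) → (¬ ∃ g ∈ G, p₁ ∈ g ∧ p₃ ∈ g) →
    (¬ ∃ g ∈ G, p₂ ∈ g ∧ p₃ ∈ g) →
    ∃! c, c ∈ C ∧ p₁ ∈ c ∧ p₂ ∈ c ∧ p₃ ∈ c)

section Aux

set_option linter.unusedSectionVars false
variable {F : Type*} [Field F] [Fintype F]

lemma aux_eq_of_smul_rep {K V : Type*} [Field K] [AddCommGroup V] [Module K V]
    {p q : ℙ K V} {a : K} (h : a • q.rep = p.rep) : p = q := by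
  have := (mk_eq_mk_iff' K p.rep q.rep p.rep_nonzero q.rep_nonzero).mpr ⟨a, h⟩
  rwa [mk_rep, mk_rep] at this

lemma aux_card_mul {α β : Type*} [Finite α] [Finite β] (f : α → β) (k : ℕ)
    (h : ∀ b : β, Nat.card {a : α // f a = b} = k) :
    Nat.card α = Nat.card β * k := by
  classical
  letI := Fintype.ofFinite α
  letI := Fintype.ofFinite β
  have h' : ∀ b : β, Fintype.card {a : α // f a = b} = k := fun b => by
    rw [← Nat.card_eq_fintype_card]; exact h b
  rw [Nat.card_eq_fintype_card, Nat.card_eq_fintype_card,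
    ← Fintype.card_congr (Equiv.sigmaFiberEquiv f), Fintype.card_sigma]
  simp [h', Finset.sum_const, mul_comm]

lemma aux_card_units : Nat.card Fˣ = Fintype.card F - 1 := by
  rw [Nat.card_units, Nat.card_eq_fintype_card]

instance aux_finite_proj : Finite (ℙ F (Fin 4 → F)) := Quotient.finite _

/-- Fiber counting for projective points inside a submodule. -/
lemma aux_card_proj (U : Submodule F (Fin 4 → F)) :
    (Nat.card {p : ℙ F (Fin 4 → F) // p.rep ∈ U}) * (Fintype.card F - 1)
      = Fintype.card F ^ Module.finrank F U - 1 := by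
  classical
  set S := {p : ℙ F (Fin 4 → F) // p.rep ∈ U} with hS
  have hne : ∀ u : {u : U // u ≠ 0}, u.1.1 ≠ 0 := fun u h => u.2 (Subtype.ext h)
  let f : {u : U // u ≠ 0} → S := fun u =>
    ⟨Projectivization.mk F u.1.1 (hne u), by
      obtain ⟨a, ha⟩ := exists_smul_eq_mk_rep F u.1.1 (hne u)
      rw [← ha]; exact U.smul_mem _ u.1.2⟩
  have hfib : ∀ b : S, Nat.card {u : {u : U // u ≠ 0} // f u = b} = Fintype.card F - 1 := by
    intro b
    rw [← aux_card_units (F := F)]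
    apply Nat.card_congr
    apply Equiv.symm
    have hb0 : ∀ a : Fˣ, ((a : F) • b.1.rep) ≠ 0 := fun a h => by
      rcases smul_eq_zero.mp h with h | h
      · exact a.ne_zero h
      · exact b.1.rep_nonzero h
    refine Equiv.ofBijective (fun a : Fˣ =>
      ⟨⟨⟨(a : F) • b.1.rep, U.smul_mem _ b.2⟩, fun h => hb0 a (by
        simpa [Subtype.ext_iff] using h)⟩, ?_⟩) ⟨?_, ?_⟩
    · apply Subtype.ext
      show Projectivization.mk F ((a : F) • b.1.rep) _ = b.1
      conv_rhs => rw [← mk_rep b.1]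
      exact (mk_eq_mk_iff F _ _ (hb0 a) b.1.rep_nonzero).mpr ⟨a, by rw [Units.smul_def]⟩
    · intro a₁ a₂ hEq
      have : (a₁ : F) • b.1.rep = (a₂ : F) • b.1.rep := by
        simpa [Subtype.ext_iff] using hEq
      exact Units.ext (smul_left_injective F b.1.rep_nonzero this)
    · rintro ⟨⟨⟨u, hu⟩, hune⟩, hfu⟩
      have hu0 : u ≠ 0 := fun h => hune (Subtype.ext h)
      have : Projectivization.mk F u hu0 = b.1 := Subtype.ext_iff.mp hfu
      rw [← mk_rep b.1] at this
      obtain ⟨a, ha⟩ := (mk_eq_mk_iff F u b.1.rep hu0 b.1.rep_nonzero).mp this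
      refine ⟨a, ?_⟩
      apply Subtype.ext; apply Subtype.ext; apply Subtype.ext
      show (a : F) • b.1.rep = u
      rw [← Units.smul_def, ha]
  have hmain := aux_card_mul f (Fintype.card F - 1) hfib
  rw [← hmain]
  -- Nat.card {u : U // u ≠ 0} = q ^ finrank - 1
  letI : Fintype U := Fintype.ofFinite U
  have hU : Nat.card U = Fintype.card F ^ Module.finrank F U := by
    rw [Nat.card_eq_fintype_card]; exact Module.card_eq_pow_finrank (K := F)
  have hset : {u : U | u ≠ 0} = (Set.univ \ {0} : Set U) := by ext u; simp
  have : Nat.card {u : U // u ≠ 0} = Nat.card U - 1 := by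
    rw [show {u : U // u ≠ 0} = ↥{u : U | u ≠ 0} from rfl, Nat.card_coe_set_eq, hset,
      Set.ncard_diff_singleton_of_mem (Set.mem_univ _), Set.ncard_univ]
  rw [this, hU]


lemma aux_card_proj_two (U : Submodule F (Fin 4 → F)) (h : Module.finrank F U = 2) :
    Nat.card {p : ℙ F (Fin 4 → F) // p.rep ∈ U} = Fintype.card F + 1 := by
  have hq : 2 ≤ Fintype.card F := Fintype.one_lt_card
  have := aux_card_proj U
  rw [h] at this
  have h2 : (Fintype.card F + 1) * (Fintype.card F - 1)
      = Fintype.card F ^ 2 - 1 := by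
    obtain ⟨m, hm⟩ := Nat.exists_eq_add_of_le hq
    rw [hm]
    have e1 : 2 + m - 1 = m + 1 := by omega
    have e2 : (2 + m) ^ 2 = m * m + 4 * m + 4 := by ring
    have e3 : (2 + m + 1) * (m + 1) = m * m + 4 * m + 3 := by ring
    rw [e1, e2, e3]; omega
  have := this.trans h2.symm
  exact Nat.eq_of_mul_eq_mul_right (by omega) this

lemma aux_ne_of_coord {p w : ℙ F (Fin 4 → F)} (h0 : p.rep 3 = 0) (hw : w.rep 3 ≠ 0) :
    p ≠ w := fun h => hw (h ▸ h0)

lemma aux_pair_indep {p q : ℙ F (Fin 4 → F)} (h : p ≠ q) :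
    LinearIndependent F ![p.rep, q.rep] := by
  have h2 := (Projectivization.independent_pair_iff_ne p q).mpr h
  rw [Projectivization.independent_iff] at h2
  have : (Projectivization.rep ∘ ![p, q]) = ![p.rep, q.rep] := by
    funext i; fin_cases i <;> rfl
  rwa [this] at h2

lemma aux_indep_cons {n : ℕ} (f : Fin n → Fin 4 → F) (hf : ∀ i, f i 3 = 0)
    (hli : LinearIndependent F f) {w : Fin 4 → F} (hw : w 3 ≠ 0) :
    LinearIndependent F (Fin.cons w f : Fin (n + 1) → Fin 4 → F) := by
  refine linearIndependent_fin_cons.mpr ⟨hli, fun hmem => hw ?_⟩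
  have hle : Submodule.span F (Set.range f) ≤ LinearMap.ker (LinearMap.proj (R := F)
      (φ := fun _ : Fin 4 => F) 3) := by
    rw [Submodule.span_le]
    rintro x ⟨i, rfl⟩
    simp [LinearMap.mem_ker, hf i]
  simpa using hle hmem

lemma aux_indep3 {v o₁ o₂ : ℙ F (Fin 4 → F)} (hv : v.rep 3 ≠ 0)
    (h1 : o₁.rep 3 = 0) (h2 : o₂.rep 3 = 0) (hne : o₁ ≠ o₂) :
    LinearIndependent F ![v.rep, o₁.rep, o₂.rep] := by
  have := aux_indep_cons ![o₁.rep, o₂.rep] (by intro i; fin_cases i <;> simpa)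
    (aux_pair_indep hne) hv
  exact this

lemma aux_span_pair_finrank {x y : Fin 4 → F} (h : LinearIndependent F ![x, y]) :
    Module.finrank F (Submodule.span F {x, y}) = 2 := by
  rw [← Matrix.range_cons_cons_empty x y ![], finrank_span_eq_card h]
  simp

lemma aux_decomp {v o p : ℙ F (Fin 4 → F)} (hp : p ≠ v)
    (hmem : p.rep ∈ Submodule.span F {v.rep, o.rep}) :
    ∃ a b : F, b ≠ 0 ∧ p.rep = a • v.rep + b • o.rep := by
  obtain ⟨a, b, hab⟩ := Submodule.mem_span_pair.mp hmem
  refine ⟨a, b, fun hb => hp ?_, hab.symm⟩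
  subst hb
  apply aux_eq_of_smul_rep (a := a)
  rw [← hab]; simp

lemma aux_gen_unique {v o₁ o₂ p : ℙ F (Fin 4 → F)} (hv : v.rep 3 ≠ 0)
    (h1 : o₁.rep 3 = 0) (h2 : o₂.rep 3 = 0) (hpv : p ≠ v)
    (hm1 : p.rep ∈ Submodule.span F {v.rep, o₁.rep})
    (hm2 : p.rep ∈ Submodule.span F {v.rep, o₂.rep}) : o₁ = o₂ := by
  by_contra hne
  have ind := aux_indep3 hv h1 h2 hne
  obtain ⟨a, b, hb, e1⟩ := aux_decomp hpv hm1
  obtain ⟨c, d, hd, e2⟩ := aux_decomp hpv hm2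
  have e3 : a • v.rep + b • o₁.rep = c • v.rep + d • o₂.rep := by rw [← e1, ← e2]
  have := Fintype.linearIndependent_iff.mp ind ![a - c, b, -d] (by
    simp only [Fin.sum_univ_three, Matrix.cons_val_zero, Matrix.cons_val_one,
      Matrix.head_cons, Matrix.cons_val_two, Matrix.tail_cons]
    linear_combination (norm := module) e3) 1
  simp at this
  exact hb this

lemma aux_unique_point (U : Submodule F (Fin 4 → F)) (h : Module.finrank F U = 1) :
    ∃! p : ℙ F (Fin 4 → F), p.rep ∈ U := by
  refine ⟨Projectivization.mk'' U h, ?_, ?_⟩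
  · have := Projectivization.submodule_mk'' U h
    rw [Projectivization.submodule_eq] at this
    have hmem : (mk'' U h).rep ∈ Submodule.span F {(mk'' U h).rep} :=
      Submodule.mem_span_singleton_self _
    rwa [this] at hmem
  · intro p hp
    apply Projectivization.submodule_injective
    rw [Projectivization.submodule_mk'' U h, Projectivization.submodule_eq]
    apply Submodule.eq_of_le_of_finrank_eq
    · rw [Submodule.span_le, Set.singleton_subset_iff]; exact hp
    · rw [finrank_span_singleton p.rep_nonzero, h]

lemma aux_inf_rank_one {W U : Submodule F (Fin 4 → F)} (hW : Module.finrank F W = 3)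
    (hU : Module.finrank F U = 2) {x : Fin 4 → F} (hxU : x ∈ U) (hxW : x ∉ W) :
    Module.finrank F ↥(W ⊓ U) = 1 := by
  have hlt : W < W ⊔ U := SetLike.lt_iff_le_and_exists.mpr
    ⟨le_sup_left, x, Submodule.mem_sup_right hxU, hxW⟩
  have h4 : Module.finrank F ↥(W ⊔ U) = 4 := by
    have hge := Submodule.finrank_lt_finrank_of_lt hlt
    have hle := Submodule.finrank_le (W ⊔ U)
    rw [hW] at hge
    simp [Module.finrank_fin_fun] at hle
    omega
  have := Submodule.finrank_sup_add_finrank_inf_eq W U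
  rw [hW, hU, h4] at this
  omega


lemma aux_range_three {x y z : Fin 4 → F} :
    Set.range ![x, y, z] = ({x, y, z} : Set (Fin 4 → F)) := by
  rw [Matrix.range_cons, Matrix.range_cons, Matrix.range_cons_empty]
  ext w; simp; tauto

lemma aux_triple {v o₁ o₂ o₃ p₁ p₂ p₃ : ℙ F (Fin 4 → F)}
    (ind4 : LinearIndependent F ![v.rep, o₁.rep, o₂.rep, o₃.rep])
    (hp₁ : p₁ ≠ v) (hp₂ : p₂ ≠ v) (hp₃ : p₃ ≠ v)
    (hm₁ : p₁.rep ∈ Submodule.span F {v.rep, o₁.rep})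
    (hm₂ : p₂.rep ∈ Submodule.span F {v.rep, o₂.rep})
    (hm₃ : p₃.rep ∈ Submodule.span F {v.rep, o₃.rep}) :
    LinearIndependent F ![p₁.rep, p₂.rep, p₃.rep] ∧
      v.rep ∉ Submodule.span F {p₁.rep, p₂.rep, p₃.rep} := by
  obtain ⟨a₁, b₁, hb₁, e₁⟩ := aux_decomp hp₁ hm₁
  obtain ⟨a₂, b₂, hb₂, e₂⟩ := aux_decomp hp₂ hm₂
  obtain ⟨a₃, b₃, hb₃, e₃⟩ := aux_decomp hp₃ hm₃
  constructor
  · apply Fintype.linearIndependent_iff.mpr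
    intro g hg
    simp only [Fin.sum_univ_three, Matrix.cons_val_zero, Matrix.cons_val_one,
      Matrix.head_cons, Matrix.cons_val_two, Matrix.tail_cons] at hg
    rw [e₁, e₂, e₃] at hg
    have key := Fintype.linearIndependent_iff.mp ind4
      ![g 0 * a₁ + g 1 * a₂ + g 2 * a₃, g 0 * b₁, g 1 * b₂, g 2 * b₃] (by
        simp only [Fin.sum_univ_four, Matrix.cons_val_zero, Matrix.cons_val_one,
          Matrix.head_cons, Matrix.cons_val_two, Matrix.tail_cons, Matrix.cons_val_three]
        linear_combination (norm := module) hg)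
    intro i
    fin_cases i
    · exact (mul_eq_zero.mp (by simpa using key 1)).resolve_right hb₁
    · exact (mul_eq_zero.mp (by simpa using key 2)).resolve_right hb₂
    · exact (mul_eq_zero.mp (by simpa using key 3)).resolve_right hb₃
  · intro hmem
    rw [← aux_range_three] at hmem
    obtain ⟨c, hc⟩ := (Submodule.mem_span_range_iff_exists_fun F).mp hmem
    simp only [Fin.sum_univ_three, Matrix.cons_val_zero, Matrix.cons_val_one,
      Matrix.head_cons, Matrix.cons_val_two, Matrix.tail_cons] at hc
    rw [e₁, e₂, e₃] at hc
    have key := Fintype.linearIndependent_iff.mp ind4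
      ![c 0 * a₁ + c 1 * a₂ + c 2 * a₃ - 1, c 0 * b₁, c 1 * b₂, c 2 * b₃] (by
        simp only [Fin.sum_univ_four, Matrix.cons_val_zero, Matrix.cons_val_one,
          Matrix.head_cons, Matrix.cons_val_two, Matrix.tail_cons, Matrix.cons_val_three]
        linear_combination (norm := module) hc)
    have hc₁ : c 0 = 0 := (mul_eq_zero.mp (by simpa using key 1)).resolve_right hb₁
    have hc₂ : c 1 = 0 := (mul_eq_zero.mp (by simpa using key 2)).resolve_right hb₂
    have hc₃ : c 2 = 0 := (mul_eq_zero.mp (by simpa using key 3)).resolve_right hb₃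
    have h0 := key 0
    rw [hc₁, hc₂, hc₃] at h0
    simp at h0


lemma aux_sup_top {W : Submodule F (Fin 4 → F)} (hW : Module.finrank F W = 3)
    {x : Fin 4 → F} (hxW : x ∉ W) : W ⊔ Submodule.span F {x} = ⊤ := by
  have hlt : W < W ⊔ Submodule.span F {x} := SetLike.lt_iff_le_and_exists.mpr
    ⟨le_sup_left, x, Submodule.mem_sup_right (Submodule.mem_span_singleton_self x), hxW⟩
  have hge := Submodule.finrank_lt_finrank_of_lt hlt
  have hle := Submodule.finrank_le (W ⊔ Submodule.span F {x})
  rw [hW] at hge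
  simp only [Module.finrank_fin_fun] at hle
  apply Submodule.eq_top_of_finrank_eq
  simp only [Module.finrank_fin_fun]
  omega

lemma aux_ker_functional {φ : (Fin 4 → F) →ₗ[F] F} {x : Fin 4 → F} (hφ : φ x = 1) :
    Module.finrank F (LinearMap.ker φ) = 3 := by
  have hr : LinearMap.range φ = ⊤ := LinearMap.range_eq_top.mpr fun c =>
    ⟨c • x, by rw [map_smul, hφ, smul_eq_mul, mul_one]⟩
  have := LinearMap.finrank_range_add_finrank_ker φ
  rw [hr, finrank_top, Module.finrank_fin_fun, Module.finrank_self] at this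
  omega

lemma aux_card_planes {x : Fin 4 → F} (hx : x ≠ 0) :
    {W : Submodule F (Fin 4 → F) | Module.finrank F W = 3 ∧ x ∉ W}.ncard
      = Fintype.card F ^ 3 := by
  classical
  -- a functional equal to 1 on x
  have : ¬ (∀ φ : Module.Dual F (Fin 4 → F), φ x = 0) := by
    rw [Module.forall_dual_apply_eq_zero_iff]; exact hx
  push_neg at this
  obtain ⟨ψ, hψ⟩ := this
  set φ₀ : Module.Dual F (Fin 4 → F) := (ψ x)⁻¹ • ψ with hφ₀def
  have hφ₀ : φ₀ x = 1 := by
    simp [hφ₀def, inv_mul_cancel₀ hψ]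
  set A : Set (Module.Dual F (Fin 4 → F)) := {φ | φ x = 1} with hA
  have hfinDual : Finite (Module.Dual F (Fin 4 → F)) :=
    Finite.of_injective _ (DFunLike.coe_injective (F := (Fin 4 → F) →ₗ[F] F))
  -- the set of planes is the image of A under ker
  have himg : {W : Submodule F (Fin 4 → F) | Module.finrank F W = 3 ∧ x ∉ W}
      = (fun φ : Module.Dual F (Fin 4 → F) => LinearMap.ker φ) '' A := by
    ext W
    constructor
    · rintro ⟨hW3, hxW⟩
      have hdisj : Disjoint (Submodule.span F {x}) W :=
        ((Submodule.disjoint_span_singleton' hx).mpr hxW).symm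
      have hcompl : IsCompl (Submodule.span F {x}) W :=
        ⟨hdisj, codisjoint_iff.mpr (by rw [sup_comm]; exact aux_sup_top hW3 hxW)⟩
      set pr := Submodule.linearProjOfIsCompl _ _ hcompl
      set e := LinearEquiv.toSpanNonzeroSingleton F (Fin 4 → F) x hx
      refine ⟨e.symm.toLinearMap ∘ₗ pr, ?_, ?_⟩
      · show e.symm (pr x) = 1
        have h1 : pr x = ⟨x, Submodule.mem_span_singleton_self x⟩ := by
          have := Submodule.linearProjOfIsCompl_apply_left hcompl
            ⟨x, Submodule.mem_span_singleton_self x⟩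
          exact this
        rw [h1, LinearEquiv.symm_apply_eq, LinearEquiv.toSpanNonzeroSingleton_one]
      · ext z
        simp only [LinearMap.mem_ker, LinearMap.coe_comp, Function.comp_apply,
          LinearEquiv.coe_coe]
        rw [LinearEquiv.map_eq_zero_iff]
        exact Submodule.linearProjOfIsCompl_apply_eq_zero_iff hcompl
    · rintro ⟨φ, hφA, rfl⟩
      exact ⟨aux_ker_functional hφA, by
        simp only [LinearMap.mem_ker]
        intro h; rw [hφA] at h; exact one_ne_zero h⟩
  rw [himg]
  -- ker is injective on A
  have hinj : Set.InjOn (fun φ : Module.Dual F (Fin 4 → F) => LinearMap.ker φ) A := by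
    intro φ₁ h₁ φ₂ h₂ hker
    have hk3 : Module.finrank F (LinearMap.ker φ₁) = 3 := aux_ker_functional h₁
    have hxk : x ∉ LinearMap.ker φ₁ := by
      simp only [LinearMap.mem_ker]; intro h; rw [h₁] at h; exact one_ne_zero h
    have hsup := aux_sup_top hk3 hxk
    apply LinearMap.ext; intro z
    have hz : z ∈ LinearMap.ker φ₁ ⊔ Submodule.span F {x} := by rw [hsup]; trivial
    obtain ⟨y, hy, w, hw, rfl⟩ := Submodule.mem_sup.mp hz
    obtain ⟨c, rfl⟩ := Submodule.mem_span_singleton.mp hw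
    have hy₂ : y ∈ LinearMap.ker φ₂ := by rw [← show LinearMap.ker φ₁ = LinearMap.ker φ₂ from hker]; exact hy
    rw [map_add, map_add, map_smul, map_smul, LinearMap.mem_ker.mp hy,
      LinearMap.mem_ker.mp hy₂, h₁, h₂]
  rw [Set.ncard_image_of_injOn hinj]
  -- A is in bijection with the kernel of evaluation at x
  set ev : Module.Dual F (Fin 4 → F) →ₗ[F] F :=
    { toFun := fun φ => φ x, map_add' := fun _ _ => rfl, map_smul' := fun _ _ => rfl }
  have hek : ∀ φ : Module.Dual F (Fin 4 → F), φ ∈ LinearMap.ker ev ↔ φ x = 0 :=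
    fun φ => Iff.rfl
  have hcardA : Nat.card A = Nat.card (LinearMap.ker ev) := by
    apply Nat.card_congr
    refine ⟨fun φ => ⟨φ.1 - φ₀, by rw [hek]; simp [map_sub]; rw [φ.2, hφ₀]; ring⟩,
      fun ψ => ⟨ψ.1 + φ₀, by show (ψ.1 + φ₀) x = 1; rw [LinearMap.add_apply, (hek ψ.1).mp ψ.2, hφ₀, zero_add]⟩,
      fun φ => by apply Subtype.ext; simp,
      fun ψ => by apply Subtype.ext; simp⟩
  rw [← Nat.card_coe_set_eq, hcardA]
  -- the kernel has q^3 elements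
  have hkrank : Module.finrank F (LinearMap.ker ev) = 3 := by
    have hr : LinearMap.range ev = ⊤ := LinearMap.range_eq_top.mpr fun c =>
      ⟨c • φ₀, by show (c • φ₀) x = c; rw [LinearMap.smul_apply, hφ₀, smul_eq_mul, mul_one]⟩
    have := LinearMap.finrank_range_add_finrank_ker ev
    rw [hr, finrank_top, Subspace.dual_finrank_eq, Module.finrank_fin_fun,
      Module.finrank_self] at this
    omega
  letI : Fintype (LinearMap.ker ev) := Fintype.ofFinite _
  rw [Nat.card_eq_fintype_card, Module.card_eq_pow_finrank (K := F), hkrank]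

end Aux

/-- Let `O` be an oval in a plane `π` of `PG(3, q)` and `V` a point not in `π`. The cone
`K` over `O` with vertex `V` yields a Laguerre plane `L₂(O)` of order `q`: its points
are the points of `K` other than `V`, its generators are the `q + 1` lines of `K`
through `V` (minus `V`), and its circles are the intersections with `K` of the planes of
`PG(3, q)` not through `V`. -/
theorem cone_over_oval_is_laguerre (F : Type*) [Field F] [Fintype F]
    (O : Set (ℙ F (Fin 4 → F)))
    (hplane : ∀ p ∈ O, Projectivization.rep p 3 = 0)
    (hcard : Nat.card O = Fintype.card F + 1)
    (h3 : ∀ p₁ ∈ O, ∀ p₂ ∈ O, ∀ p₃ ∈ O, p₁ ≠ p₂ → p₁ ≠ p₃ → p₂ ≠ p₃ →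
      Independent ![p₁, p₂, p₃])
    (v : ℙ F (Fin 4 → F)) (hv : Projectivization.rep v 3 ≠ 0) :
    IsLaguerreOn
      ({p | ∃ o ∈ O, Projectivization.rep p ∈
          Submodule.span F {Projectivization.rep v, Projectivization.rep o}} \ {v})
      (Fintype.card F)
      {c | ∃ W : Submodule F (Fin 4 → F), Module.finrank F W = 3 ∧
          Projectivization.rep v ∉ W ∧
          c = {p | (∃ o ∈ O, Projectivization.rep p ∈
              Submodule.span F {Projectivization.rep v, Projectivization.rep o}) ∧
            Projectivization.rep p ∈ W}}
      {g | ∃ o ∈ O, g = {p | Projectivization.rep p ∈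
          Submodule.span F {Projectivization.rep v, Projectivization.rep o}} \ {v}} := by

  classical
  have hq2 : 2 ≤ Fintype.card F := Fintype.one_lt_card
  have hvne : ∀ o ∈ O, o ≠ v := fun o ho => aux_ne_of_coord (hplane o ho) hv
  have hvo : ∀ o ∈ O, LinearIndependent F ![v.rep, o.rep] :=
    fun o ho => aux_pair_indep (hvne o ho).symm
  have hU2 : ∀ o ∈ O, Module.finrank F (Submodule.span F {v.rep, o.rep}) = 2 :=
    fun o ho => aux_span_pair_finrank (hvo o ho)
  have hvmem : ∀ o : ℙ F (Fin 4 → F), v.rep ∈ Submodule.span F {v.rep, o.rep} :=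
    fun o => Submodule.subset_span (Set.mem_insert _ _)
  have homem : ∀ o : ℙ F (Fin 4 → F), o.rep ∈ Submodule.span F {v.rep, o.rep} :=
    fun o => Submodule.subset_span (by simp)
  have hGU : ∀ o₁ ∈ O, ∀ o₂ ∈ O, ∀ p : ℙ F (Fin 4 → F), p ≠ v →
      p.rep ∈ Submodule.span F {v.rep, o₁.rep} →
      p.rep ∈ Submodule.span F {v.rep, o₂.rep} → o₁ = o₂ :=
    fun o₁ h₁ o₂ h₂ p hpv hm₁ hm₂ =>
      aux_gen_unique hv (hplane o₁ h₁) (hplane o₂ h₂) hpv hm₁ hm₂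
  have hGenCard : ∀ o ∈ O,
      Nat.card ({p : ℙ F (Fin 4 → F) | p.rep ∈ Submodule.span F {v.rep, o.rep}} \ {v} : Set _)
        = Fintype.card F := by
    intro o ho
    rw [Nat.card_coe_set_eq, Set.ncard_diff_singleton_of_mem
      (show v ∈ {p : ℙ F (Fin 4 → F) | p.rep ∈ Submodule.span F {v.rep, o.rep}} from hvmem o)]
    have : ({p : ℙ F (Fin 4 → F) | p.rep ∈ Submodule.span F {v.rep, o.rep}}).ncard
        = Fintype.card F + 1 := by
      rw [← Nat.card_coe_set_eq]
      exact aux_card_proj_two _ (hU2 o ho)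
    rw [this]; omega
  have hOtriple : ∀ o₁ ∈ O, ∀ o₂ ∈ O, ∀ o₃ ∈ O, o₁ ≠ o₂ → o₁ ≠ o₃ → o₂ ≠ o₃ →
      LinearIndependent F ![o₁.rep, o₂.rep, o₃.rep] := by
    intro o₁ h₁ o₂ h₂ o₃ hh₃ h12 h13 h23
    have := h3 o₁ h₁ o₂ h₂ o₃ hh₃ h12 h13 h23
    rw [Projectivization.independent_iff] at this
    have he : (Projectivization.rep ∘ ![o₁, o₂, o₃]) = ![o₁.rep, o₂.rep, o₃.rep] := by
      funext i; fin_cases i <;> rfl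
    rwa [he] at this
  have hO3 : ∃ o₁ ∈ O, ∃ o₂ ∈ O, ∃ o₃ ∈ O, o₁ ≠ o₂ ∧ o₁ ≠ o₃ ∧ o₂ ≠ o₃ := by
    have hOcard : O.ncard = Fintype.card F + 1 := by
      rw [← Nat.card_coe_set_eq, hcard]
    have h1 : O.Nonempty := by
      rw [← Set.ncard_pos (Set.toFinite O), hOcard]; omega
    obtain ⟨o₁, ho₁⟩ := h1
    have h2 : ∃ o₂ ∈ O, o₂ ≠ o₁ := by
      by_contra hcon
      push_neg at hcon
      have : O ⊆ {o₁} := fun x hx => hcon x hx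
      have := Set.ncard_le_ncard this (Set.toFinite _)
      rw [hOcard, Set.ncard_singleton] at this; omega
    obtain ⟨o₂, ho₂, h21⟩ := h2
    have h3' : ∃ o₃ ∈ O, o₃ ≠ o₁ ∧ o₃ ≠ o₂ := by
      by_contra hcon
      push_neg at hcon
      have : O ⊆ {o₁, o₂} := by
        intro x hx
        rcases eq_or_ne x o₁ with h | h
        · exact Set.mem_insert_iff.mpr (Or.inl h)
        · exact Set.mem_insert_iff.mpr (Or.inr (hcon x hx h))
      have := Set.ncard_le_ncard this (Set.toFinite _)
      have hp : ({o₁, o₂} : Set (ℙ F (Fin 4 → F))).ncard ≤ 2 := Set.ncard_insert_le _ _ |>.trans (by rw [Set.ncard_singleton])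
      rw [hOcard] at this; omega
    obtain ⟨o₃, ho₃, h31, h32⟩ := h3'
    exact ⟨o₁, ho₁, o₂, ho₂, o₃, ho₃, h21.symm, h31.symm, h32.symm⟩
  -- the unique intersection point of a plane with a generator line
  have hMeet : ∀ W : Submodule F (Fin 4 → F), Module.finrank F W = 3 → v.rep ∉ W →
      ∀ o ∈ O, ∃! p : ℙ F (Fin 4 → F),
        p.rep ∈ W ⊓ Submodule.span F {v.rep, o.rep} := by
    intro W hW3 hvW o ho
    exact aux_unique_point _ (aux_inf_rank_one hW3 (hU2 o ho) (hvmem o) hvW)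
  -- planes are determined by their circles
  have hCircInj : ∀ W₁ : Submodule F (Fin 4 → F), Module.finrank F W₁ = 3 → v.rep ∉ W₁ →
      ∀ W₂ : Submodule F (Fin 4 → F), Module.finrank F W₂ = 3 → v.rep ∉ W₂ →
      ({p : ℙ F (Fin 4 → F) | (∃ o ∈ O, p.rep ∈ Submodule.span F {v.rep, o.rep}) ∧ p.rep ∈ W₁}
        = {p : ℙ F (Fin 4 → F) | (∃ o ∈ O, p.rep ∈ Submodule.span F {v.rep, o.rep}) ∧ p.rep ∈ W₂})
      → W₁ = W₂ := by
    intro W₁ hW₁ hvW₁ W₂ hW₂ hvW₂ hEq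
    obtain ⟨o₁, ho₁, o₂, ho₂, o₃, ho₃, h12, h13, h23⟩ := hO3
    obtain ⟨p₁, hp₁, -⟩ := hMeet W₁ hW₁ hvW₁ o₁ ho₁
    obtain ⟨p₂, hp₂, -⟩ := hMeet W₁ hW₁ hvW₁ o₂ ho₂
    obtain ⟨p₃, hp₃, -⟩ := hMeet W₁ hW₁ hvW₁ o₃ ho₃
    rw [Submodule.mem_inf] at hp₁ hp₂ hp₃
    have hp₁v : p₁ ≠ v := fun h => hvW₁ (h ▸ hp₁.1)
    have hp₂v : p₂ ≠ v := fun h => hvW₁ (h ▸ hp₂.1)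
    have hp₃v : p₃ ≠ v := fun h => hvW₁ (h ▸ hp₃.1)
    have ind4 : LinearIndependent F ![v.rep, o₁.rep, o₂.rep, o₃.rep] :=
      aux_indep_cons ![o₁.rep, o₂.rep, o₃.rep]
        (by intro i
            fin_cases i
            · exact hplane o₁ ho₁
            · exact hplane o₂ ho₂
            · exact hplane o₃ ho₃)
        (hOtriple o₁ ho₁ o₂ ho₂ o₃ ho₃ h12 h13 h23) hv
    obtain ⟨hind, -⟩ := aux_triple ind4 hp₁v hp₂v hp₃v hp₁.2 hp₂.2 hp₃.2
    have hrank : Module.finrank F (Submodule.span F {p₁.rep, p₂.rep, p₃.rep}) = 3 := by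
      rw [← aux_range_three, finrank_span_eq_card hind]; simp
    have hW₂mem : ∀ i : Fin 3, (![p₁, p₂, p₃] i).rep ∈ W₂ := by
      intro i
      have : ∀ p : ℙ F (Fin 4 → F), p ∈ {p : ℙ F (Fin 4 → F) |
          (∃ o ∈ O, p.rep ∈ Submodule.span F {v.rep, o.rep}) ∧ p.rep ∈ W₁} → p.rep ∈ W₂ := by
        intro p hp; rw [hEq] at hp; exact hp.2
      fin_cases i
      · exact this p₁ ⟨⟨o₁, ho₁, hp₁.2⟩, hp₁.1⟩
      · exact this p₂ ⟨⟨o₂, ho₂, hp₂.2⟩, hp₂.1⟩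
      · exact this p₃ ⟨⟨o₃, ho₃, hp₃.2⟩, hp₃.1⟩
    have hle₁ : Submodule.span F {p₁.rep, p₂.rep, p₃.rep} ≤ W₁ := by
      rw [Submodule.span_le]
      intro x hx
      simp only [Set.mem_insert_iff, Set.mem_singleton_iff] at hx
      rcases hx with rfl | rfl | rfl
      exacts [hp₁.1, hp₂.1, hp₃.1]
    have hle₂ : Submodule.span F {p₁.rep, p₂.rep, p₃.rep} ≤ W₂ := by
      rw [Submodule.span_le]
      intro x hx
      simp only [Set.mem_insert_iff, Set.mem_singleton_iff] at hx
      rcases hx with rfl | rfl | rfl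
      exacts [hW₂mem 0, hW₂mem 1, hW₂mem 2]
    have e₁ := Submodule.eq_of_le_of_finrank_eq hle₁ (by rw [hrank, hW₁])
    have e₂ := Submodule.eq_of_le_of_finrank_eq hle₂ (by rw [hrank, hW₂])
    rw [← e₁, ← e₂]
  have hmemP : ∀ p : ℙ F (Fin 4 → F),
      p ∈ ({p : ℙ F (Fin 4 → F) | ∃ o ∈ O, p.rep ∈
          Submodule.span F {v.rep, o.rep}} \ {v}) →
      (∃ o ∈ O, p.rep ∈ Submodule.span F {v.rep, o.rep}) ∧ p ≠ v := fun p h => h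
  refine ⟨?_, ?_, ?_, ?_, ?_, ?_, ?_, ?_, ?_⟩
  · -- number of points
    let f : ↥({p : ℙ F (Fin 4 → F) | ∃ o ∈ O, p.rep ∈
        Submodule.span F {v.rep, o.rep}} \ {v}) → ↥O :=
      fun p => ⟨(hmemP p.1 p.2).1.choose, (hmemP p.1 p.2).1.choose_spec.1⟩
    have hfib : ∀ b : ↥O, Nat.card {a // f a = b} = Fintype.card F := by
      intro b
      rw [← hGenCard b.1 b.2]
      apply Nat.card_congr
      refine ⟨fun a => ⟨a.1.1, ?_, (hmemP a.1.1 a.1.2).2⟩,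
        fun x => ⟨⟨x.1, ⟨b.1, b.2, x.2.1⟩, x.2.2⟩, Subtype.ext
          (hGU _ (hmemP x.1 ⟨⟨b.1, b.2, x.2.1⟩, x.2.2⟩).1.choose_spec.1 b.1 b.2 x.1 x.2.2
            (hmemP x.1 ⟨⟨b.1, b.2, x.2.1⟩, x.2.2⟩).1.choose_spec.2 x.2.1)⟩,
        fun a => by apply Subtype.ext; apply Subtype.ext; rfl,
        fun x => by apply Subtype.ext; rfl⟩
      have he : (hmemP a.1.1 a.1.2).1.choose = b.1 := congrArg Subtype.val a.2
      exact he ▸ (hmemP a.1.1 a.1.2).1.choose_spec.2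
    have hres := aux_card_mul f (Fintype.card F) hfib
    rw [hres, hcard]
    ring
  · -- number of circles
    have himg : {c | ∃ W : Submodule F (Fin 4 → F), Module.finrank F W = 3 ∧
          v.rep ∉ W ∧ c = {p : ℙ F (Fin 4 → F) | (∃ o ∈ O, p.rep ∈
            Submodule.span F {v.rep, o.rep}) ∧ p.rep ∈ W}}
        = (fun W : Submodule F (Fin 4 → F) =>
            {p : ℙ F (Fin 4 → F) | (∃ o ∈ O, p.rep ∈
              Submodule.span F {v.rep, o.rep}) ∧ p.rep ∈ W}) ''
          {W : Submodule F (Fin 4 → F) | Module.finrank F W = 3 ∧ v.rep ∉ W} := by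
      ext c; constructor
      · rintro ⟨W, h1, h2, rfl⟩; exact ⟨W, ⟨h1, h2⟩, rfl⟩
      · rintro ⟨W, ⟨h1, h2⟩, rfl⟩; exact ⟨W, h1, h2, rfl⟩
    have hinj : Set.InjOn (fun W : Submodule F (Fin 4 → F) =>
        {p : ℙ F (Fin 4 → F) | (∃ o ∈ O, p.rep ∈
          Submodule.span F {v.rep, o.rep}) ∧ p.rep ∈ W})
        {W : Submodule F (Fin 4 → F) | Module.finrank F W = 3 ∧ v.rep ∉ W} :=
      fun W₁ h₁ W₂ h₂ hEq => hCircInj W₁ h₁.1 h₁.2 W₂ h₂.1 h₂.2 hEq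
    rw [Nat.card_coe_set_eq, himg, Set.ncard_image_of_injOn hinj,
      aux_card_planes v.rep_nonzero]
  · -- number of generators
    have himg : {g | ∃ o ∈ O, g = {p : ℙ F (Fin 4 → F) | p.rep ∈
          Submodule.span F {v.rep, o.rep}} \ {v}}
        = (fun o : ℙ F (Fin 4 → F) => {p : ℙ F (Fin 4 → F) | p.rep ∈
            Submodule.span F {v.rep, o.rep}} \ {v}) '' O := by
      ext g; constructor
      · rintro ⟨o, ho, rfl⟩; exact ⟨o, ho, rfl⟩
      · rintro ⟨o, ho, rfl⟩; exact ⟨o, ho, rfl⟩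
    have hinj : Set.InjOn (fun o : ℙ F (Fin 4 → F) => {p : ℙ F (Fin 4 → F) | p.rep ∈
        Submodule.span F {v.rep, o.rep}} \ {v}) O := by
      intro o₁ h₁ o₂ h₂ hEq
      have ho₁g : o₁ ∈ ({p : ℙ F (Fin 4 → F) | p.rep ∈
          Submodule.span F {v.rep, o₁.rep}} \ {v}) := ⟨homem o₁, hvne o₁ h₁⟩
      have h2 : o₁ ∈ ({p : ℙ F (Fin 4 → F) | p.rep ∈
          Submodule.span F {v.rep, o₂.rep}} \ {v}) := by
        have hEq' : ({p : ℙ F (Fin 4 → F) | p.rep ∈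
            Submodule.span F {v.rep, o₁.rep}} \ {v})
            = ({p : ℙ F (Fin 4 → F) | p.rep ∈
            Submodule.span F {v.rep, o₂.rep}} \ {v}) := hEq
        rw [← hEq']
        exact ho₁g
      exact hGU o₁ h₁ o₂ h₂ o₁ (hvne o₁ h₁) (homem o₁) h2.1
    rw [Nat.card_coe_set_eq, himg, Set.ncard_image_of_injOn hinj,
      ← Nat.card_coe_set_eq, hcard]
  · -- circles are sets of points
    rintro c ⟨W, hW3, hvW, rfl⟩ x ⟨hxc, hxW⟩
    exact ⟨hxc, fun h => hvW ((Set.mem_singleton_iff.mp h) ▸ hxW)⟩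
  · -- generators are sets of points
    rintro g ⟨o, ho, rfl⟩ x ⟨hx, hxv⟩
    exact ⟨⟨o, ho, hx⟩, hxv⟩
  · -- generators have q points
    rintro g ⟨o, ho, rfl⟩
    exact hGenCard o ho
  · -- each point is on a unique generator
    rintro p ⟨⟨o, ho, hm⟩, hpv⟩
    have hpv' : p ≠ v := hpv
    refine ⟨{p' : ℙ F (Fin 4 → F) | p'.rep ∈ Submodule.span F {v.rep, o.rep}} \ {v},
      ⟨⟨o, ho, rfl⟩, hm, hpv⟩, ?_⟩
    rintro g' ⟨⟨o', ho', rfl⟩, hm', hpv''⟩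
    rw [hGU o' ho' o ho p hpv' hm' hm]
  · -- each circle meets each generator exactly once
    rintro c ⟨W, hW3, hvW, rfl⟩ g ⟨o, ho, rfl⟩
    obtain ⟨p, hp, hpu⟩ := hMeet W hW3 hvW o ho
    rw [Submodule.mem_inf] at hp
    have hpv : p ≠ v := fun h => hvW (h ▸ hp.1)
    refine ⟨p, ⟨⟨⟨o, ho, hp.2⟩, hp.1⟩, hp.2, hpv⟩, ?_⟩
    rintro p' ⟨⟨-, hW'⟩, hm', -⟩
    exact hpu p' (Submodule.mem_inf.mpr ⟨hW', hm'⟩)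
  · -- three pairwise non-parallel points lie on a unique circle
    rintro p₁ ⟨⟨o₁, ho₁, hm₁⟩, hp₁v⟩ p₂ ⟨⟨o₂, ho₂, hm₂⟩, hp₂v⟩ p₃ ⟨⟨o₃, ho₃, hm₃⟩, hp₃v⟩
      h12 h13 h23
    have hp₁v' : p₁ ≠ v := hp₁v
    have hp₂v' : p₂ ≠ v := hp₂v
    have hp₃v' : p₃ ≠ v := hp₃v
    have hne12 : o₁ ≠ o₂ := by
      rintro rfl
      exact h12 ⟨{p : ℙ F (Fin 4 → F) | p.rep ∈ Submodule.span F {v.rep, o₁.rep}} \ {v},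
        ⟨o₁, ho₁, rfl⟩, ⟨hm₁, hp₁v⟩, ⟨hm₂, hp₂v⟩⟩
    have hne13 : o₁ ≠ o₃ := by
      rintro rfl
      exact h13 ⟨{p : ℙ F (Fin 4 → F) | p.rep ∈ Submodule.span F {v.rep, o₁.rep}} \ {v},
        ⟨o₁, ho₁, rfl⟩, ⟨hm₁, hp₁v⟩, ⟨hm₃, hp₃v⟩⟩
    have hne23 : o₂ ≠ o₃ := by
      rintro rfl
      exact h23 ⟨{p : ℙ F (Fin 4 → F) | p.rep ∈ Submodule.span F {v.rep, o₂.rep}} \ {v},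
        ⟨o₂, ho₂, rfl⟩, ⟨hm₂, hp₂v⟩, ⟨hm₃, hp₃v⟩⟩
    have ind4 : LinearIndependent F ![v.rep, o₁.rep, o₂.rep, o₃.rep] :=
      aux_indep_cons ![o₁.rep, o₂.rep, o₃.rep]
        (by intro i
            fin_cases i
            · exact hplane o₁ ho₁
            · exact hplane o₂ ho₂
            · exact hplane o₃ ho₃)
        (hOtriple o₁ ho₁ o₂ ho₂ o₃ ho₃ hne12 hne13 hne23) hv
    obtain ⟨hind, hvsp⟩ := aux_triple ind4 hp₁v' hp₂v' hp₃v' hm₁ hm₂ hm₃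
    have hrank : Module.finrank F
        (Submodule.span F {p₁.rep, p₂.rep, p₃.rep}) = 3 := by
      rw [← aux_range_three, finrank_span_eq_card hind]; simp
    refine ⟨{p : ℙ F (Fin 4 → F) | (∃ o ∈ O, p.rep ∈
        Submodule.span F {v.rep, o.rep}) ∧ p.rep ∈
        Submodule.span F {p₁.rep, p₂.rep, p₃.rep}},
      ⟨⟨Submodule.span F {p₁.rep, p₂.rep, p₃.rep}, hrank, hvsp, rfl⟩,
        ⟨⟨o₁, ho₁, hm₁⟩, Submodule.subset_span (by simp)⟩,
        ⟨⟨o₂, ho₂, hm₂⟩, Submodule.subset_span (by simp)⟩,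
        ⟨⟨o₃, ho₃, hm₃⟩, Submodule.subset_span (by simp)⟩⟩, ?_⟩
    rintro c' ⟨⟨W', hW'3, hvW', rfl⟩, hc₁, hc₂, hc₃⟩
    have hle : Submodule.span F {p₁.rep, p₂.rep, p₃.rep} ≤ W' := by
      rw [Submodule.span_le]
      intro x hx
      simp only [Set.mem_insert_iff, Set.mem_singleton_iff] at hx
      rcases hx with rfl | rfl | rfl
      exacts [hc₁.2, hc₂.2, hc₃.2]
    have heq := Submodule.eq_of_le_of_finrank_eq hle (by rw [hrank, hW'3])
    rw [← heq]
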